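/- Let μ be a probability measure on (Θ, Σ) and let Φ1, Φ2 : Θ → ℝ be μ-essentially bounded measurable functions with 0 < Z_{Φi,μ} < ∞ for i = 1, 2, and suppose both μ(Φ1 − Φ2 > 0) > 0 and μ(Φ1 − Φ2 < 0) > 0. Then the following strict lower bounds hold: if Z_{Φ1,μ} = Z_{Φ2,μ}, then d_TV(μ_{Φ1}, μ_{Φ2}) > (1/2) · min(exp(−‖Φ1‖_{L^∞_μ}), exp(−‖Φ2‖_{L^∞_μ})) / min(Z_{Φ1,μ}, Z_{Φ2,μ}) · ‖Φ1 − Φ2‖_{L¹_μ}; if Z_{Φ1,μ} > Z_{Φ2,μ}, then d_TV(μ_{Φ1}, μ_{Φ2}) > exp(−‖Φ1‖_{L^∞_μ}) · Z_{Φ2,μ}⁻¹ · ∫_{{Φ1 > Φ2}} |Φ1 − Φ2| dμ; if Z_{Φ1,μ} < Z_{Φ2,μ}, then d_TV(μ_{Φ1}, μ_{Φ2}) > exp(−‖Φ2‖_{L^∞_μ}) · Z_{Φ1,μ}⁻¹ · ∫_{{Φ2 > Φ1}} |Φ1 − Φ2| dμ. -/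

import Mathlib

open MeasureTheory Real

namespace PaperStmt

variable {Θ : Type*}

/-- The evidence `Z_{Φ,μ} = ∫ exp (-Φ) dμ`. -/
noncomputable def evid [MeasurableSpace Θ] (μ : Measure Θ) (Φ : Θ → ℝ) : ℝ :=
  ∫ θ, Real.exp (-(Φ θ)) ∂μ

private lemma exp_gap (a b c : ℝ) (hab : a < b) (hbc : b ≤ c) :
    Real.exp (-c) * (b - a) < Real.exp (-a) - Real.exp (-b) := by
  have h0 : (b - a) + 1 < Real.exp (b - a) := Real.add_one_lt_exp (by linarith)
  have h1 : Real.exp (-a) = Real.exp (-b) * Real.exp (b - a) := by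
    rw [← Real.exp_add]; ring_nf
  have h2 : Real.exp (-c) ≤ Real.exp (-b) := Real.exp_le_exp.mpr (by linarith)
  have h3 : 0 < Real.exp (-b) := Real.exp_pos _
  nlinarith

private lemma integral_pos_of_ae_pos {α : Type*} [MeasurableSpace α] {ν : Measure α}
    {f : α → ℝ} (hfi : Integrable f ν) (hpos : ∀ᵐ x ∂ν, 0 < f x)
    (hν : ν Set.univ ≠ 0) : 0 < ∫ x, f x ∂ν := by
  rw [integral_pos_iff_support_of_nonneg_ae (hpos.mono fun x hx => hx.le) hfi]
  have hc : ν (Function.support f)ᶜ = 0 := by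
    refine measure_mono_null (fun x hx => ?_) (mem_ae_iff.mp hpos)
    simp only [Function.mem_support, not_not, Set.mem_compl_iff] at hx
    simp [Set.mem_setOf_eq, hx]
  have h := measure_union_le (μ := ν) (Function.support f) (Function.support f)ᶜ
  rw [Set.union_compl_self, hc, add_zero] at h
  exact lt_of_lt_of_le (pos_iff_ne_zero.mpr hν) h

private lemma ae_abs_le_essSup {α : Type*} [MeasurableSpace α] {ν : Measure α}
    {f : α → ℝ} (hf : MemLp f ⊤ ν) :
    ∀ᵐ x ∂ν, |f x| ≤ essSup (fun x => |f x|) ν := by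
  have hne : eLpNormEssSup f ν ≠ ⊤ := by
    have h := hf.2
    rwa [eLpNorm_exponent_top, lt_top_iff_ne_top] at h
  have hC : ∀ᵐ x ∂ν, |f x| ≤ (eLpNormEssSup f ν).toReal := by
    filter_upwards [ae_le_eLpNormEssSup (f := f) (μ := ν)] with x hx
    have h2 : ((‖f x‖₊ : ENNReal)).toReal ≤ (eLpNormEssSup f ν).toReal :=
      ENNReal.toReal_mono hne hx
    simpa [Real.norm_eq_abs] using h2
  have hbd : Filter.IsBoundedUnder (· ≤ ·) (ae ν) (fun x => |f x|) :=
    ⟨(eLpNormEssSup f ν).toReal, by rwa [Filter.eventually_map]⟩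
  exact ae_le_essSup hbd

private lemma aux_gt [MeasurableSpace Θ] (μ : Measure Θ) [IsProbabilityMeasure μ]
    (Φ1 Φ2 : Θ → ℝ) (hm1 : Measurable Φ1) (hm2 : Measurable Φ2)
    (hb1 : MemLp Φ1 ⊤ μ) (hb2 : MemLp Φ2 ⊤ μ)
    (hint1 : Integrable (fun θ => Real.exp (-(Φ1 θ))) μ)
    (hint2 : Integrable (fun θ => Real.exp (-(Φ2 θ))) μ)
    (hZ1 : 0 < evid μ Φ1) (hZ2 : 0 < evid μ Φ2)
    (hgt : 0 < μ {θ | Φ2 θ < Φ1 θ}) (hZ : evid μ Φ2 < evid μ Φ1) :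
    Real.exp (-essSup (fun θ => |Φ1 θ|) μ) * (evid μ Φ2)⁻¹
        * ∫ θ in {θ | Φ2 θ < Φ1 θ}, |Φ1 θ - Φ2 θ| ∂μ
      < (1 / 2) * ∫ θ, |Real.exp (-(Φ1 θ)) / evid μ Φ1
          - Real.exp (-(Φ2 θ)) / evid μ Φ2| ∂μ := by
  set Z1 := evid μ Φ1 with hZ1def
  set Z2 := evid μ Φ2 with hZ2def
  set M1 := essSup (fun θ => |Φ1 θ|) μ with hM1def
  set A := {θ | Φ2 θ < Φ1 θ} with hAdef
  have hA : MeasurableSet A := measurableSet_lt hm2 hm1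
  set g : Θ → ℝ := fun θ => Real.exp (-(Φ2 θ)) / Z2 - Real.exp (-(Φ1 θ)) / Z1 with hgdef
  have hgi : Integrable g μ := (hint2.div_const _).sub (hint1.div_const _)
  have hsum : ∫ θ, g θ ∂μ = 0 := by
    rw [hgdef]
    rw [integral_sub (hint2.div_const _) (hint1.div_const _), integral_div, integral_div]
    have e1 : (∫ θ, Real.exp (-(Φ1 θ)) ∂μ) = Z1 := rfl
    have e2 : (∫ θ, Real.exp (-(Φ2 θ)) ∂μ) = Z2 := rfl
    rw [e1, e2, div_self (ne_of_gt hZ2), div_self (ne_of_gt hZ1), sub_self]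
  have habs : (∫ θ, |Real.exp (-(Φ1 θ)) / Z1 - Real.exp (-(Φ2 θ)) / Z2| ∂μ)
      = ∫ θ, |g θ| ∂μ :=
    integral_congr_ae (Filter.Eventually.of_forall fun θ => abs_sub_comm _ _)
  have hmax : ∫ θ, max (g θ) 0 ∂μ = (1 / 2) * ∫ θ, |g θ| ∂μ := by
    have hpt : ∀ θ, max (g θ) 0 = (|g θ| + g θ) / 2 := fun θ => by
      rcases le_or_gt (g θ) 0 with h | h
      · rw [max_eq_right h, abs_of_nonpos h]; ring
      · rw [max_eq_left h.le, abs_of_pos h]; ring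
    rw [integral_congr_ae (Filter.Eventually.of_forall hpt), integral_div,
      integral_add hgi.abs hgi, hsum]
    ring
  have h1 : ∫ θ in A, g θ ∂μ ≤ ∫ θ, max (g θ) 0 ∂μ := by
    calc ∫ θ in A, g θ ∂μ ≤ ∫ θ in A, max (g θ) 0 ∂μ := by
          exact integral_mono_ae hgi.restrict hgi.pos_part.restrict
            (Filter.Eventually.of_forall fun θ => le_max_left _ _)
      _ ≤ ∫ θ, max (g θ) 0 ∂μ :=
          setIntegral_le_integral hgi.pos_part
            (Filter.Eventually.of_forall fun θ => le_max_right _ _)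
  set c := Real.exp (-M1) / Z2 with hcdef
  have hΦint : Integrable (fun θ => Φ1 θ - Φ2 θ) μ :=
    (hb1.integrable le_top).sub (hb2.integrable le_top)
  have hrfi : Integrable (fun θ => g θ - c * (Φ1 θ - Φ2 θ)) (μ.restrict A) :=
    hgi.restrict.sub ((hΦint.const_mul c).restrict)
  have hposint : 0 < ∫ θ in A, (g θ - c * (Φ1 θ - Φ2 θ)) ∂μ := by
    apply integral_pos_of_ae_pos hrfi
    · have hb : ∀ᵐ θ ∂μ, |Φ1 θ| ≤ M1 := ae_abs_le_essSup hb1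
      filter_upwards [ae_restrict_mem hA, ae_restrict_of_ae hb] with θ hθA hθb
      have hab : Φ2 θ < Φ1 θ := hθA
      have hbc : Φ1 θ ≤ M1 := le_trans (le_abs_self _) hθb
      have hgap := exp_gap (Φ2 θ) (Φ1 θ) M1 hab hbc
      have hZd : Real.exp (-(Φ1 θ)) / Z1 < Real.exp (-(Φ1 θ)) / Z2 :=
        div_lt_div_of_pos_left (Real.exp_pos _) hZ2 hZ
      have h2 : Real.exp (-M1) * (Φ1 θ - Φ2 θ) / Z2
          < (Real.exp (-(Φ2 θ)) - Real.exp (-(Φ1 θ))) / Z2 :=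
        (div_lt_div_iff_of_pos_right hZ2).mpr hgap
      have h3 : c * (Φ1 θ - Φ2 θ) = Real.exp (-M1) * (Φ1 θ - Φ2 θ) / Z2 := by
        rw [hcdef]; ring
      have h4 : (Real.exp (-(Φ2 θ)) - Real.exp (-(Φ1 θ))) / Z2
          = Real.exp (-(Φ2 θ)) / Z2 - Real.exp (-(Φ1 θ)) / Z2 := by ring
      simp only [hgdef]
      linarith [h2, h3, h4, hZd]
    · rw [Measure.restrict_apply_univ]; exact hgt.ne'
  have hsub : ∫ θ in A, (g θ - c * (Φ1 θ - Φ2 θ)) ∂μ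
      = (∫ θ in A, g θ ∂μ) - c * ∫ θ in A, (Φ1 θ - Φ2 θ) ∂μ := by
    rw [integral_sub hgi.restrict ((hΦint.const_mul c).restrict), integral_const_mul]
  have hkey : c * ∫ θ in A, (Φ1 θ - Φ2 θ) ∂μ < ∫ θ in A, g θ ∂μ := by
    rw [hsub] at hposint; linarith
  have hAbs : ∫ θ in A, |Φ1 θ - Φ2 θ| ∂μ = ∫ θ in A, (Φ1 θ - Φ2 θ) ∂μ :=
    setIntegral_congr_fun hA fun θ hθ => abs_of_pos (sub_pos.mpr hθ)
  have hc' : Real.exp (-M1) * Z2⁻¹ = c := by rw [hcdef, div_eq_mul_inv]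
  calc Real.exp (-M1) * Z2⁻¹ * ∫ θ in A, |Φ1 θ - Φ2 θ| ∂μ
      = c * ∫ θ in A, (Φ1 θ - Φ2 θ) ∂μ := by rw [hAbs, hc']
    _ < ∫ θ in A, g θ ∂μ := hkey
    _ ≤ ∫ θ, max (g θ) 0 ∂μ := h1
    _ = (1 / 2) * ∫ θ, |g θ| ∂μ := hmax
    _ = (1 / 2) * ∫ θ, |Real.exp (-(Φ1 θ)) / Z1 - Real.exp (-(Φ2 θ)) / Z2| ∂μ := by
        rw [habs]

private lemma aux_eq [MeasurableSpace Θ] (μ : Measure Θ) [IsProbabilityMeasure μ]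
    (Φ1 Φ2 : Θ → ℝ) (hm1 : Measurable Φ1) (hm2 : Measurable Φ2)
    (hb1 : MemLp Φ1 ⊤ μ) (hb2 : MemLp Φ2 ⊤ μ)
    (hint1 : Integrable (fun θ => Real.exp (-(Φ1 θ))) μ)
    (hint2 : Integrable (fun θ => Real.exp (-(Φ2 θ))) μ)
    (hZ1 : 0 < evid μ Φ1) (hZ2 : 0 < evid μ Φ2)
    (hgt : 0 < μ {θ | Φ2 θ < Φ1 θ}) (hEq : evid μ Φ1 = evid μ Φ2) :
    (1 / 2) * (min (Real.exp (-essSup (fun θ => |Φ1 θ|) μ))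
          (Real.exp (-essSup (fun θ => |Φ2 θ|) μ))
        / min (evid μ Φ1) (evid μ Φ2))
        * ∫ θ, |Φ1 θ - Φ2 θ| ∂μ
      < (1 / 2) * ∫ θ, |Real.exp (-(Φ1 θ)) / evid μ Φ1
          - Real.exp (-(Φ2 θ)) / evid μ Φ2| ∂μ := by
  set Z1 := evid μ Φ1 with hZ1def
  set M1 := essSup (fun θ => |Φ1 θ|) μ with hM1def
  set M2 := essSup (fun θ => |Φ2 θ|) μ with hM2def
  set K := max M1 M2 with hKdef
  set A := {θ | Φ2 θ < Φ1 θ} with hAdef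
  have hA : MeasurableSet A := measurableSet_lt hm2 hm1
  set c := Real.exp (-K) with hcdef
  set h : Θ → ℝ := fun θ =>
    |Real.exp (-(Φ1 θ)) - Real.exp (-(Φ2 θ))| - c * |Φ1 θ - Φ2 θ| with hhdef
  have hΦint : Integrable (fun θ => |Φ1 θ - Φ2 θ|) μ :=
    ((hb1.integrable le_top).sub (hb2.integrable le_top)).abs
  have heint : Integrable (fun θ => |Real.exp (-(Φ1 θ)) - Real.exp (-(Φ2 θ))|) μ :=
    (hint1.sub hint2).abs
  have hhint : Integrable h μ := heint.sub (hΦint.const_mul c)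
  have hbae : ∀ᵐ θ ∂μ, |Φ1 θ| ≤ M1 ∧ |Φ2 θ| ≤ M2 :=
    (ae_abs_le_essSup hb1).and (ae_abs_le_essSup hb2)
  -- a.e. nonnegativity of h
  have hh0 : ∀ᵐ θ ∂μ, 0 ≤ h θ := by
    filter_upwards [hbae] with θ hθ
    rcases lt_trichotomy (Φ1 θ) (Φ2 θ) with hlt | heq | hgt'
    · have hbc : Φ2 θ ≤ K := le_trans (le_trans (le_abs_self _) hθ.2) (le_max_right _ _)
      have := exp_gap (Φ1 θ) (Φ2 θ) K hlt hbc
      have h1 : |Real.exp (-(Φ1 θ)) - Real.exp (-(Φ2 θ))|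
          = Real.exp (-(Φ1 θ)) - Real.exp (-(Φ2 θ)) := by
        rw [abs_of_pos]; exact sub_pos.mpr (Real.exp_lt_exp.mpr (by linarith))
      have h2 : |Φ1 θ - Φ2 θ| = Φ2 θ - Φ1 θ := by
        rw [abs_of_neg (sub_neg.mpr hlt)]; ring
      simp only [hhdef]; rw [h1, h2]; linarith
    · simp [hhdef, heq]
    · have hbc : Φ1 θ ≤ K := le_trans (le_trans (le_abs_self _) hθ.1) (le_max_left _ _)
      have := exp_gap (Φ2 θ) (Φ1 θ) K hgt' hbc
      have h1 : |Real.exp (-(Φ1 θ)) - Real.exp (-(Φ2 θ))|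
          = Real.exp (-(Φ2 θ)) - Real.exp (-(Φ1 θ)) := by
        rw [abs_sub_comm, abs_of_pos]
        exact sub_pos.mpr (Real.exp_lt_exp.mpr (by linarith))
      have h2 : |Φ1 θ - Φ2 θ| = Φ1 θ - Φ2 θ := abs_of_pos (sub_pos.mpr hgt')
      simp only [hhdef]; rw [h1, h2]; linarith
  -- strict positivity of ∫_A h
  have hApos : 0 < ∫ θ in A, h θ ∂μ := by
    apply integral_pos_of_ae_pos hhint.restrict
    · filter_upwards [ae_restrict_mem hA, ae_restrict_of_ae hbae] with θ hθA hθ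
      have hgt' : Φ2 θ < Φ1 θ := hθA
      have hbc : Φ1 θ ≤ K := le_trans (le_trans (le_abs_self _) hθ.1) (le_max_left _ _)
      have := exp_gap (Φ2 θ) (Φ1 θ) K hgt' hbc
      have h1 : |Real.exp (-(Φ1 θ)) - Real.exp (-(Φ2 θ))|
          = Real.exp (-(Φ2 θ)) - Real.exp (-(Φ1 θ)) := by
        rw [abs_sub_comm, abs_of_pos]
        exact sub_pos.mpr (Real.exp_lt_exp.mpr (by linarith))
      have h2 : |Φ1 θ - Φ2 θ| = Φ1 θ - Φ2 θ := abs_of_pos (sub_pos.mpr hgt')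
      simp only [hhdef]; rw [h1, h2]; linarith
    · rw [Measure.restrict_apply_univ]; exact hgt.ne'
  have hint_le : ∫ θ in A, h θ ∂μ ≤ ∫ θ, h θ ∂μ := setIntegral_le_integral hhint hh0
  have hckey : c * ∫ θ, |Φ1 θ - Φ2 θ| ∂μ
      < ∫ θ, |Real.exp (-(Φ1 θ)) - Real.exp (-(Φ2 θ))| ∂μ := by
    have hs : ∫ θ, h θ ∂μ
        = (∫ θ, |Real.exp (-(Φ1 θ)) - Real.exp (-(Φ2 θ))| ∂μ)
          - c * ∫ θ, |Φ1 θ - Φ2 θ| ∂μ := by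
      rw [hhdef]
      rw [integral_sub heint (hΦint.const_mul c), integral_const_mul]
    have := lt_of_lt_of_le hApos hint_le
    rw [hs] at this; linarith
  -- rewrite the target
  have hminexp : min (Real.exp (-M1)) (Real.exp (-M2)) = c := by
    rw [hcdef, hKdef]
    rcases le_total M1 M2 with hle | hle
    · rw [max_eq_right hle, min_eq_right (Real.exp_le_exp.mpr (by linarith))]
    · rw [max_eq_left hle, min_eq_left (Real.exp_le_exp.mpr (by linarith))]
  have hminZ : min Z1 (evid μ Φ2) = Z1 := by rw [← hEq, min_self]
  have hRHS : ∫ θ, |Real.exp (-(Φ1 θ)) / Z1 - Real.exp (-(Φ2 θ)) / evid μ Φ2| ∂μ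
      = (∫ θ, |Real.exp (-(Φ1 θ)) - Real.exp (-(Φ2 θ))| ∂μ) / Z1 := by
    rw [← hEq, ← integral_div]
    refine integral_congr_ae (Filter.Eventually.of_forall fun θ => ?_)
    simp only [div_sub_div_same, abs_div, abs_of_pos hZ1]
  rw [hminexp, hminZ, hRHS]
  have hdiv : c * (∫ θ, |Φ1 θ - Φ2 θ| ∂μ) / Z1
      < (∫ θ, |Real.exp (-(Φ1 θ)) - Real.exp (-(Φ2 θ))| ∂μ) / Z1 :=
    (div_lt_div_iff_of_pos_right hZ1).mpr hckey
  calc (1 / 2) * (c / Z1) * ∫ θ, |Φ1 θ - Φ2 θ| ∂μ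
      = (c * (∫ θ, |Φ1 θ - Φ2 θ| ∂μ) / Z1) / 2 := by ring
    _ < ((∫ θ, |Real.exp (-(Φ1 θ)) - Real.exp (-(Φ2 θ))| ∂μ) / Z1) / 2 := by linarith
    _ = (1 / 2) * ((∫ θ, |Real.exp (-(Φ1 θ)) - Real.exp (-(Φ2 θ))| ∂μ) / Z1) := by ring

/-- strict total variation lower bounds for misfit perturbations when
`Φ1 - Φ2` changes sign with positive probability, in the three cases
`Z_{Φ1,μ} = Z_{Φ2,μ}`, `Z_{Φ1,μ} > Z_{Φ2,μ}` and `Z_{Φ1,μ} < Z_{Φ2,μ}`. Here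
`d_TV(μ_{Φ1}, μ_{Φ2}) = (1/2) ∫ |ℓ_{Φ1,μ} - ℓ_{Φ2,μ}| dμ` and `‖Φ‖_{L^∞_μ}` is the
`μ`-essential supremum of `|Φ|`. -/
theorem stmt5 [MeasurableSpace Θ] (μ : Measure Θ) [IsProbabilityMeasure μ]
    (Φ1 Φ2 : Θ → ℝ) (hm1 : Measurable Φ1) (hm2 : Measurable Φ2)
    (hb1 : MemLp Φ1 ⊤ μ) (hb2 : MemLp Φ2 ⊤ μ)
    (hint1 : Integrable (fun θ => Real.exp (-(Φ1 θ))) μ)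
    (hint2 : Integrable (fun θ => Real.exp (-(Φ2 θ))) μ)
    (hZ1 : 0 < evid μ Φ1) (hZ2 : 0 < evid μ Φ2)
    (hgt : 0 < μ {θ | Φ2 θ < Φ1 θ}) (hlt : 0 < μ {θ | Φ1 θ < Φ2 θ}) :
    (evid μ Φ1 = evid μ Φ2 →
      (1 / 2) * (min (Real.exp (-essSup (fun θ => |Φ1 θ|) μ))
            (Real.exp (-essSup (fun θ => |Φ2 θ|) μ))
          / min (evid μ Φ1) (evid μ Φ2))
          * ∫ θ, |Φ1 θ - Φ2 θ| ∂μ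
        < (1 / 2) * ∫ θ, |Real.exp (-(Φ1 θ)) / evid μ Φ1
            - Real.exp (-(Φ2 θ)) / evid μ Φ2| ∂μ)
    ∧ (evid μ Φ2 < evid μ Φ1 →
        Real.exp (-essSup (fun θ => |Φ1 θ|) μ) * (evid μ Φ2)⁻¹
            * ∫ θ in {θ | Φ2 θ < Φ1 θ}, |Φ1 θ - Φ2 θ| ∂μ
          < (1 / 2) * ∫ θ, |Real.exp (-(Φ1 θ)) / evid μ Φ1
              - Real.exp (-(Φ2 θ)) / evid μ Φ2| ∂μ)
    ∧ (evid μ Φ1 < evid μ Φ2 →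
        Real.exp (-essSup (fun θ => |Φ2 θ|) μ) * (evid μ Φ1)⁻¹
            * ∫ θ in {θ | Φ1 θ < Φ2 θ}, |Φ1 θ - Φ2 θ| ∂μ
          < (1 / 2) * ∫ θ, |Real.exp (-(Φ1 θ)) / evid μ Φ1
              - Real.exp (-(Φ2 θ)) / evid μ Φ2| ∂μ) := by
  refine ⟨fun hEq => aux_eq μ Φ1 Φ2 hm1 hm2 hb1 hb2 hint1 hint2 hZ1 hZ2 hgt hEq,
    fun hZ => aux_gt μ Φ1 Φ2 hm1 hm2 hb1 hb2 hint1 hint2 hZ1 hZ2 hgt hZ,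
    fun hZ => ?_⟩
  have h := aux_gt μ Φ2 Φ1 hm2 hm1 hb2 hb1 hint2 hint1 hZ2 hZ1 hlt hZ
  have h1 : ∫ θ in {θ | Φ1 θ < Φ2 θ}, |Φ2 θ - Φ1 θ| ∂μ
      = ∫ θ in {θ | Φ1 θ < Φ2 θ}, |Φ1 θ - Φ2 θ| ∂μ :=
    integral_congr_ae (Filter.Eventually.of_forall fun θ => abs_sub_comm _ _)
  have h2 : ∫ θ, |Real.exp (-(Φ2 θ)) / evid μ Φ2 - Real.exp (-(Φ1 θ)) / evid μ Φ1| ∂μ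
      = ∫ θ, |Real.exp (-(Φ1 θ)) / evid μ Φ1 - Real.exp (-(Φ2 θ)) / evid μ Φ2| ∂μ :=
    integral_congr_ae (Filter.Eventually.of_forall fun θ => abs_sub_comm _ _)
  rw [h1, h2] at h
  exact h

end PaperStmt
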